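/- The mean-square error of the estimator ĝ^e = (wc/(1+w²c))·(ζ/√(cM) − ĝ), where ĝ is the MMSE estimate of g from (r, q, ζ), equals E[|ĝ^e − g^e|²] = 1/((1+w²c)M) + (wc/(1+w²c))² · σ_g²σ_n²/(σ_g² q†q + σ_n²), which is proportional to 1/M. -/

import Mathlib

open MeasureTheory ProbabilityTheory Filter

noncomputable instance (M : ℕ) : MeasureSpace (EuclideanSpace ℂ (Fin M)) :=
  ⟨Measure.map (WithLp.toLp 2) (volume : Measure (Fin M → ℂ))⟩
instance (M : ℕ) : BorelSpace (EuclideanSpace ℂ (Fin M)) :=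
  inferInstance
instance (M : ℕ) : PolishSpace (EuclideanSpace ℂ (Fin M)) :=
  inferInstance

/-- The circularly-symmetric complex Gaussian distribution `CN(μ, v)` on `ℂ`,
given by the density `z ↦ (π v)⁻¹ exp(-|z-μ|²/v)` w.r.t. Lebesgue measure. -/
noncomputable def cn (μ : ℂ) (v : ℝ) : Measure ℂ :=
  volume.withDensity fun z =>
    ENNReal.ofReal ((Real.pi * v)⁻¹ * Real.exp (-(‖z - μ‖) ^ 2 / v))

/-- The circularly-symmetric complex Gaussian distribution `CN(μ, v • I_M)` on `ℂ^M`. -/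
noncomputable def cnVec (M : ℕ) (μ : EuclideanSpace ℂ (Fin M)) (v : ℝ) :
    Measure (EuclideanSpace ℂ (Fin M)) :=
  volume.withDensity fun x =>
    ENNReal.ofReal (((Real.pi * v) ^ M)⁻¹ * Real.exp (-‖x - μ‖ ^ 2 / v))


section Aux

open Real Set Topology
open scoped NNReal ENNReal

-- 1-d Gaussian facts

lemma gauss_int_odd {b : ℝ} : ∫ x : ℝ, x * Real.exp (-b * x ^ 2) = 0 := by
  have h := integral_neg_eq_self (fun x : ℝ => x * Real.exp (-b * x ^ 2)) volume
  simp only [neg_sq, neg_mul] at h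
  rw [integral_neg] at h
  simp only [neg_mul] at *
  linarith

lemma gauss_integrable_sq {b : ℝ} (hb : 0 < b) :
    Integrable fun x : ℝ => x ^ 2 * Real.exp (-b * x ^ 2) := by
  have h := integrable_rpow_mul_exp_neg_mul_sq hb (by norm_num : (-1:ℝ) < 2)
  have : ∀ x : ℝ, x ^ (2:ℝ) = x ^ (2:ℕ) := fun x => by
    rw [← Real.rpow_natCast x 2]; norm_num
  simpa [this] using h

lemma gauss_integrable_cube {b : ℝ} (hb : 0 < b) :
    Integrable fun x : ℝ => x ^ 3 * Real.exp (-b * x ^ 2) := by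
  have h := integrable_rpow_mul_exp_neg_mul_sq hb (by norm_num : (-1:ℝ) < 3)
  have : ∀ x : ℝ, x ^ (3:ℝ) = x ^ (3:ℕ) := fun x => by
    rw [← Real.rpow_natCast x 3]; norm_num
  simpa [this] using h

lemma gauss_cube_Ioi {b : ℝ} (hb : 0 < b) :
    ∫ r in Ioi (0:ℝ), r ^ 3 * Real.exp (-b * r ^ 2) = 1 / (2 * b ^ 2) := by
  have hb' : b ≠ 0 := ne_of_gt hb
  set F : ℝ → ℝ := fun r => -(r ^ 2 / (2 * b) + 1 / (2 * b ^ 2)) * Real.exp (-b * r ^ 2) with hF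
  have hderiv : ∀ r ∈ Ici (0:ℝ), HasDerivAt F (r ^ 3 * Real.exp (-b * r ^ 2)) r := by
    intro r _
    have h1 : HasDerivAt (fun r : ℝ => -(r ^ 2 / (2 * b) + 1 / (2 * b ^ 2)))
        (-((2:ℕ) * r ^ 1 / (2 * b))) r := by
      exact (((hasDerivAt_pow 2 r).div_const (2 * b)).add_const (1 / (2 * b ^ 2))).neg
    have h2 : HasDerivAt (fun r : ℝ => Real.exp (-b * r ^ 2))
        (Real.exp (-b * r ^ 2) * (-b * ((2:ℕ) * r ^ 1))) r := by
      exact ((hasDerivAt_pow 2 r).const_mul (-b)).exp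
    have := h1.mul h2
    refine this.congr_deriv ?_
    field_simp
    ring
  have hint : IntegrableOn (fun r : ℝ => r ^ 3 * Real.exp (-b * r ^ 2)) (Ioi 0) :=
    (gauss_integrable_cube hb).integrableOn
  have htend : Tendsto F atTop (𝓝 0) := by
    have t1 : Tendsto (fun r : ℝ => r ^ 2 * Real.exp (-b * r ^ 2)) atTop (𝓝 0) := by
      have h := tendsto_rpow_mul_exp_neg_mul_atTop_nhds_zero 1 b hb
      have h2 : Tendsto (fun r : ℝ => r ^ 2) atTop atTop :=
        tendsto_pow_atTop (by norm_num)
      have := h.comp h2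
      simpa [Function.comp_def, Real.rpow_one] using this
    have t2 : Tendsto (fun r : ℝ => Real.exp (-b * r ^ 2)) atTop (𝓝 0) := by
      have h := tendsto_rpow_mul_exp_neg_mul_atTop_nhds_zero 0 b hb
      have h2 : Tendsto (fun r : ℝ => r ^ 2) atTop atTop :=
        tendsto_pow_atTop (by norm_num)
      have := h.comp h2
      simpa [Function.comp_def, Real.rpow_zero] using this
    have := ((t1.const_mul (1 / (2 * b))).add (t2.const_mul (1 / (2 * b ^ 2)))).neg
    have heq : (fun r : ℝ => -(1 / (2 * b) * (r ^ 2 * Real.exp (-b * r ^ 2)) +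
        1 / (2 * b ^ 2) * Real.exp (-b * r ^ 2))) = F := by
      funext r; simp only [hF]; ring
    rw [heq] at this
    simpa using this
  have := integral_Ioi_of_hasDerivAt_of_tendsto'
    (f := F) (f' := fun r => r ^ 3 * Real.exp (-b * r ^ 2))
    (a := 0) hderiv hint htend
  rw [this]
  simp [hF]

end Aux

section CNAux

open Real Set Topology
open scoped NNReal ENNReal

section CN

open scoped NNReal ENNReal

variable {v : ℝ}

lemma cn_density_pos (hv : 0 < v) (z : ℂ) :
    0 < (Real.pi * v)⁻¹ * Real.exp (-(‖z‖) ^ 2 / v) :=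
  mul_pos (inv_pos.mpr (mul_pos Real.pi_pos hv)) (Real.exp_pos _)

lemma cn_density_measurable (v : ℝ) :
    Measurable fun z : ℂ => (Real.pi * v)⁻¹ * Real.exp (-(‖z‖) ^ 2 / v) := by
  have h : Measurable fun z : ℂ => -(‖z‖) ^ 2 / v :=
    ((continuous_norm.measurable.pow_const 2).neg).div_const v
  exact (Real.measurable_exp.comp h).const_mul _

lemma cn_zero_eq (v : ℝ) : cn 0 v = volume.withDensity
    (fun z => ((((Real.pi * v)⁻¹ *
      Real.exp (-(‖z‖) ^ 2 / v)).toNNReal : ℝ≥0) : ℝ≥0∞)) := by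
  simp only [cn, sub_zero]
  rfl

lemma cn_ne_zero (hv : 0 < v) : cn 0 v ≠ 0 := by
  intro h
  have h0 : (cn 0 v) Set.univ = 0 := by rw [h]; simp
  rw [cn_zero_eq, withDensity_apply _ MeasurableSet.univ, Measure.restrict_univ] at h0
  have hmeas : Measurable fun z : ℂ =>
      ((((Real.pi * v)⁻¹ * Real.exp (-(‖z‖) ^ 2 / v)).toNNReal : ℝ≥0) : ℝ≥0∞) :=
    (cn_density_measurable v).real_toNNReal.coe_nnreal_ennreal
  have hae := (lintegral_eq_zero_iff hmeas).mp h0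
  have : (volume : Measure ℂ) Set.univ = 0 := by
    have : ∀ᵐ z : ℂ ∂volume, False := by
      filter_upwards [hae] with z hz
      have hpos := cn_density_pos hv z
      simp only [Pi.zero_apply, ENNReal.coe_eq_zero] at hz
      rw [Real.toNNReal_eq_zero] at hz
      linarith
    simpa [ae_iff] using this
  exact isOpen_univ.measure_ne_zero volume Set.univ_nonempty this

lemma integral_cn (hv : 0 < v) (f : ℂ → ℝ) :
    ∫ z, f z ∂(cn 0 v)
      = ∫ z, ((Real.pi * v)⁻¹ * Real.exp (-(‖z‖) ^ 2 / v)) * f z := by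
  rw [cn_zero_eq, integral_withDensity_eq_integral_smul
    (cn_density_measurable v).real_toNNReal f]
  congr 1; funext z
  rw [NNReal.smul_def, Real.coe_toNNReal _ (le_of_lt (cn_density_pos hv z)), smul_eq_mul]

lemma integrable_cn_iff (hv : 0 < v) (f : ℂ → ℝ) :
    Integrable f (cn 0 v) ↔
      Integrable (fun z =>
        ((Real.pi * v)⁻¹ * Real.exp (-(‖z‖) ^ 2 / v)) * f z) volume := by
  have heq : (fun z : ℂ =>
      ((((Real.pi * v)⁻¹ * Real.exp (-(‖z‖) ^ 2 / v)).toNNReal : ℝ≥0)) • f z)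
      = fun z => ((Real.pi * v)⁻¹ * Real.exp (-(‖z‖) ^ 2 / v)) * f z := by
    funext z
    rw [NNReal.smul_def, Real.coe_toNNReal _ (le_of_lt (cn_density_pos hv z)), smul_eq_mul]
  rw [cn_zero_eq, integrable_withDensity_iff_integrable_smul
    (cn_density_measurable v).real_toNNReal, heq]

lemma integral_complex_eq (F : ℂ → ℝ) :
    ∫ z, F z = ∫ p : ℝ × ℝ, F ⟨p.1, p.2⟩ := by
  rw [← (Complex.volume_preserving_equiv_real_prod.symm
    Complex.measurableEquivRealProd).integral_comp
    Complex.measurableEquivRealProd.symm.measurableEmbedding F]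
  simp_rw [Complex.measurableEquivRealProd_symm_apply]

lemma integrable_complex_iff (F : ℂ → ℝ) :
    Integrable F (volume : Measure ℂ) ↔
      Integrable (fun p : ℝ × ℝ => F ⟨p.1, p.2⟩) volume := by
  rw [← (Complex.volume_preserving_equiv_real_prod.symm
    Complex.measurableEquivRealProd).integrable_comp_emb
    Complex.measurableEquivRealProd.symm.measurableEmbedding (g := F)]
  constructor <;> intro h <;>
    [exact h.congr (Filter.Eventually.of_forall fun p => by
      simp [Function.comp, Complex.measurableEquivRealProd_symm_apply]);
     exact h.congr (Filter.Eventually.of_forall fun p => by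
      simp [Function.comp, Complex.measurableEquivRealProd_symm_apply])]

lemma abs_mk_sq (x y : ℝ) : (‖Complex.mk x y‖) ^ 2 = x ^ 2 + y ^ 2 := by
  rw [Complex.sq_norm, Complex.normSq_mk]; ring

lemma exp_split (hv : 0 < v) (x y : ℝ) :
    Real.exp (-(x ^ 2 + y ^ 2) / v)
      = Real.exp (-v⁻¹ * x ^ 2) * Real.exp (-v⁻¹ * y ^ 2) := by
  rw [← Real.exp_add]
  congr 1
  field_simp
  ring

lemma cn_integrable_re (hv : 0 < v) : Integrable (fun z : ℂ => z.re) (cn 0 v) := by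
  rw [integrable_cn_iff hv, integrable_complex_iff]
  have heq : (fun p : ℝ × ℝ =>
      ((Real.pi * v)⁻¹ * Real.exp (-(‖Complex.mk p.1 p.2‖) ^ 2 / v)) * (Complex.mk p.1 p.2).re)
      = fun p : ℝ × ℝ => ((Real.pi * v)⁻¹ * (p.1 * Real.exp (-v⁻¹ * p.1 ^ 2)))
          * Real.exp (-v⁻¹ * p.2 ^ 2) := by
    funext p
    rw [abs_mk_sq, exp_split hv]
    show _ * p.1 = _
    ring
  rw [heq, Measure.volume_eq_prod]
  exact ((integrable_mul_exp_neg_mul_sq (inv_pos.mpr hv)).const_mul _).mul_prod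
    (integrable_exp_neg_mul_sq (inv_pos.mpr hv))

lemma cn_integral_re (hv : 0 < v) : ∫ z, z.re ∂(cn 0 v) = 0 := by
  rw [integral_cn hv, integral_complex_eq]
  have heq : (fun p : ℝ × ℝ =>
      ((Real.pi * v)⁻¹ * Real.exp (-(‖Complex.mk p.1 p.2‖) ^ 2 / v)) * (Complex.mk p.1 p.2).re)
      = fun p : ℝ × ℝ => ((Real.pi * v)⁻¹ * (p.1 * Real.exp (-v⁻¹ * p.1 ^ 2)))
          * Real.exp (-v⁻¹ * p.2 ^ 2) := by
    funext p
    rw [abs_mk_sq, exp_split hv]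
    show _ * p.1 = _
    ring
  rw [show (∫ p : ℝ × ℝ, ((Real.pi * v)⁻¹
      * Real.exp (-(‖Complex.mk p.1 p.2‖) ^ 2 / v)) * (Complex.mk p.1 p.2).re)
    = ∫ p : ℝ × ℝ, ((Real.pi * v)⁻¹ * (p.1 * Real.exp (-v⁻¹ * p.1 ^ 2)))
          * Real.exp (-v⁻¹ * p.2 ^ 2) from congrArg _ heq]
  rw [Measure.volume_eq_prod, integral_prod_mul
    (f := fun x : ℝ => (Real.pi * v)⁻¹ * (x * Real.exp (-v⁻¹ * x ^ 2)))
    (g := fun y : ℝ => Real.exp (-v⁻¹ * y ^ 2)), integral_const_mul, gauss_int_odd]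
  simp

lemma cn_integrable_im (hv : 0 < v) : Integrable (fun z : ℂ => z.im) (cn 0 v) := by
  rw [integrable_cn_iff hv, integrable_complex_iff]
  have heq : (fun p : ℝ × ℝ =>
      ((Real.pi * v)⁻¹ * Real.exp (-(‖Complex.mk p.1 p.2‖) ^ 2 / v)) * (Complex.mk p.1 p.2).im)
      = fun p : ℝ × ℝ => ((Real.pi * v)⁻¹ * Real.exp (-v⁻¹ * p.1 ^ 2))
          * (p.2 * Real.exp (-v⁻¹ * p.2 ^ 2)) := by
    funext p
    rw [abs_mk_sq, exp_split hv]
    show _ * p.2 = _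
    ring
  rw [heq, Measure.volume_eq_prod]
  exact ((integrable_exp_neg_mul_sq (inv_pos.mpr hv)).const_mul _).mul_prod
    (integrable_mul_exp_neg_mul_sq (inv_pos.mpr hv))

lemma cn_integral_im (hv : 0 < v) : ∫ z, z.im ∂(cn 0 v) = 0 := by
  rw [integral_cn hv, integral_complex_eq]
  have heq : (fun p : ℝ × ℝ =>
      ((Real.pi * v)⁻¹ * Real.exp (-(‖Complex.mk p.1 p.2‖) ^ 2 / v)) * (Complex.mk p.1 p.2).im)
      = fun p : ℝ × ℝ => ((Real.pi * v)⁻¹ * Real.exp (-v⁻¹ * p.1 ^ 2))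
          * (p.2 * Real.exp (-v⁻¹ * p.2 ^ 2)) := by
    funext p
    rw [abs_mk_sq, exp_split hv]
    show _ * p.2 = _
    ring
  rw [show (∫ p : ℝ × ℝ, ((Real.pi * v)⁻¹
      * Real.exp (-(‖Complex.mk p.1 p.2‖) ^ 2 / v)) * (Complex.mk p.1 p.2).im)
    = ∫ p : ℝ × ℝ, ((Real.pi * v)⁻¹ * Real.exp (-v⁻¹ * p.1 ^ 2))
          * (p.2 * Real.exp (-v⁻¹ * p.2 ^ 2)) from congrArg _ heq]
  rw [Measure.volume_eq_prod, integral_prod_mul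
    (f := fun x : ℝ => (Real.pi * v)⁻¹ * Real.exp (-v⁻¹ * x ^ 2))
    (g := fun y : ℝ => y * Real.exp (-v⁻¹ * y ^ 2)), gauss_int_odd]
  simp

lemma cn_integrable_absSq (hv : 0 < v) :
    Integrable (fun z : ℂ => ‖z‖ ^ 2) (cn 0 v) := by
  rw [integrable_cn_iff hv, integrable_complex_iff]
  have heq : (fun p : ℝ × ℝ =>
      ((Real.pi * v)⁻¹ * Real.exp (-(‖Complex.mk p.1 p.2‖) ^ 2 / v))
        * ‖Complex.mk p.1 p.2‖ ^ 2)
      = fun p : ℝ × ℝ =>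
        ((Real.pi * v)⁻¹ * (p.1 ^ 2 * Real.exp (-v⁻¹ * p.1 ^ 2)))
            * Real.exp (-v⁻¹ * p.2 ^ 2)
          + ((Real.pi * v)⁻¹ * Real.exp (-v⁻¹ * p.1 ^ 2))
            * (p.2 ^ 2 * Real.exp (-v⁻¹ * p.2 ^ 2)) := by
    funext p
    rw [abs_mk_sq, exp_split hv]
    ring
  rw [heq, Measure.volume_eq_prod]
  exact (((gauss_integrable_sq (inv_pos.mpr hv)).const_mul _).mul_prod
      (integrable_exp_neg_mul_sq (inv_pos.mpr hv))).add
    (((integrable_exp_neg_mul_sq (inv_pos.mpr hv)).const_mul _).mul_prod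
      (gauss_integrable_sq (inv_pos.mpr hv)))

lemma cn_integral_absSq (hv : 0 < v) :
    ∫ z, ‖z‖ ^ 2 ∂(cn 0 v) = v := by
  rw [integral_cn hv]
  rw [← Complex.integral_comp_polarCoord_symm
    (fun z => ((Real.pi * v)⁻¹ * Real.exp (-(‖z‖) ^ 2 / v)) * ‖z‖ ^ 2)]
  have htarget : MeasurableSet polarCoord.target :=
    measurableSet_Ioi.prod measurableSet_Ioo
  have hcongr : ∫ p in polarCoord.target,
      p.1 • (((Real.pi * v)⁻¹
          * Real.exp (-(‖Complex.polarCoord.symm p‖) ^ 2 / v))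
        * ‖Complex.polarCoord.symm p‖ ^ 2)
      = ∫ p in polarCoord.target,
        (fun r : ℝ => (Real.pi * v)⁻¹ * (r ^ 3 * Real.exp (-v⁻¹ * r ^ 2))) p.1
          * (fun _ : ℝ => (1:ℝ)) p.2 := by
    apply setIntegral_congr_fun htarget
    intro p hp
    have hp1 : 0 < p.1 := by
      rw [polarCoord_target] at hp
      exact hp.1
    dsimp only
    rw [Complex.norm_polarCoord_symm, abs_of_pos hp1]
    have : -p.1 ^ 2 / v = -v⁻¹ * p.1 ^ 2 := by field_simp
    rw [this]
    simp only [smul_eq_mul]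
    ring
  rw [hcongr, polarCoord_target, Measure.volume_eq_prod, ← Measure.prod_restrict,
    integral_prod_mul (f := fun r : ℝ => (Real.pi * v)⁻¹ * (r ^ 3 * Real.exp (-v⁻¹ * r ^ 2)))
      (g := fun _ : ℝ => (1:ℝ))]
  rw [integral_const_mul, gauss_cube_Ioi (inv_pos.mpr hv)]
  simp only [integral_const, Measure.restrict_apply, MeasurableSet.univ, Set.univ_inter,
    Real.volume_Ioo, smul_eq_mul, mul_one]
  rw [measureReal_restrict_apply_univ,
    Real.volume_real_Ioo_of_le (by linarith [Real.pi_pos] : -Real.pi ≤ Real.pi)]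
  have hπ : Real.pi ≠ 0 := ne_of_gt Real.pi_pos
  have hv' : v ≠ 0 := ne_of_gt hv
  field_simp
  ring

end CN

end CNAux

/-- MSE of the eavesdropper-gain estimator. With
`ĝ^e = (wc/(1+w²c))(ζ/√(cM) − ĝ)`, where the MMSE error `e₁ = g − ĝ` has law
`CN(0, σ_g²σ_n²/(σ_g² q†q + σ_n²))`, and
`g^e = (wc/(1+w²c))(ζ/√(cM) − g) + e₂` with `e₂ ~ CN(0, 1/((1+w²c)M))`
independent of `e₁`, the mean-square error is
`E[|ĝ^e − g^e|²] = 1/((1+w²c)M) + (wc/(1+w²c))² σ_g²σ_n²/(σ_g² q†q + σ_n²)`. -/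
theorem mse_of_eve_gain_estimator
    (M Nd : ℕ) (hM : 1 ≤ M) (c w vg vn : ℝ)
    (hc : 0 < c) (hw : 0 ≤ w) (hvg : 0 < vg) (hvn : 0 < vn)
    (Ω : Type) [MeasureSpace Ω] [IsProbabilityMeasure (ℙ : Measure Ω)]
    (q : EuclideanSpace ℂ (Fin Nd)) (hq : q ≠ 0)
    (ζ : Ω → ℝ) (g ghat ge e₁ e₂ : Ω → ℂ)
    (he₁ : e₁ = fun ω => g ω - ghat ω)
    (he₁law : Measure.map e₁ ℙ = cn 0 (vg * vn / (vg * ‖q‖ ^ 2 + vn)))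
    (hge : ge = fun ω =>
      ((w * c / (1 + w ^ 2 * c) : ℝ) : ℂ)
          * (((ζ ω / Real.sqrt (c * M) : ℝ) : ℂ) - g ω) + e₂ ω)
    (he₂law : Measure.map e₂ ℙ = cn 0 (1 / ((1 + w ^ 2 * c) * M)))
    (hindep : IndepFun e₁ e₂ ℙ)
    (gehat : Ω → ℂ)
    (hgehat : gehat = fun ω =>
      ((w * c / (1 + w ^ 2 * c) : ℝ) : ℂ)
          * (((ζ ω / Real.sqrt (c * M) : ℝ) : ℂ) - ghat ω)) :
    ∫ ω, (‖gehat ω - ge ω‖) ^ 2 ∂ℙ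
      = 1 / ((1 + w ^ 2 * c) * M)
        + (w * c / (1 + w ^ 2 * c)) ^ 2 * (vg * vn / (vg * ‖q‖ ^ 2 + vn)) := by
  have h1c : (0:ℝ) < 1 + w ^ 2 * c := by positivity
  have hMR : (0:ℝ) < (M : ℝ) := by
    have : (1:ℝ) ≤ (M : ℝ) := by exact_mod_cast hM
    linarith
  set a : ℝ := w * c / (1 + w ^ 2 * c) with ha
  set v₁ : ℝ := vg * vn / (vg * ‖q‖ ^ 2 + vn) with hv₁def
  set v₂ : ℝ := 1 / ((1 + w ^ 2 * c) * M) with hv₂def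
  have hv₁ : 0 < v₁ := by
    rw [hv₁def]; positivity
  have hv₂ : 0 < v₂ := by
    rw [hv₂def]; exact div_pos one_pos (mul_pos h1c hMR)
  -- a.e.-measurability of the errors
  have hmeas₁ : AEMeasurable e₁ ℙ := by
    by_contra h
    rw [Measure.map_of_not_aemeasurable h] at he₁law
    exact cn_ne_zero hv₁ he₁law.symm
  have hmeas₂ : AEMeasurable e₂ ℙ := by
    by_contra h
    rw [Measure.map_of_not_aemeasurable h] at he₂law
    exact cn_ne_zero hv₂ he₂law.symm
  -- transferred integrability facts
  have i₁re : Integrable (fun ω => (e₁ ω).re) ℙ := by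
    have h := cn_integrable_re hv₁
    rw [← he₁law] at h
    exact (integrable_map_measure Complex.measurable_re.aestronglyMeasurable hmeas₁).mp h
  have i₁im : Integrable (fun ω => (e₁ ω).im) ℙ := by
    have h := cn_integrable_im hv₁
    rw [← he₁law] at h
    exact (integrable_map_measure Complex.measurable_im.aestronglyMeasurable hmeas₁).mp h
  have i₂re : Integrable (fun ω => (e₂ ω).re) ℙ := by
    have h := cn_integrable_re hv₂
    rw [← he₂law] at h
    exact (integrable_map_measure Complex.measurable_re.aestronglyMeasurable hmeas₂).mp h
  have i₂im : Integrable (fun ω => (e₂ ω).im) ℙ := by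
    have h := cn_integrable_im hv₂
    rw [← he₂law] at h
    exact (integrable_map_measure Complex.measurable_im.aestronglyMeasurable hmeas₂).mp h
  have habsmeas : Measurable fun z : ℂ => ‖z‖ ^ 2 :=
    continuous_norm.measurable.pow_const 2
  have i₁abs : Integrable (fun ω => ‖e₁ ω‖ ^ 2) ℙ := by
    have h := cn_integrable_absSq hv₁
    rw [← he₁law] at h
    exact (integrable_map_measure habsmeas.aestronglyMeasurable hmeas₁).mp h
  have i₂abs : Integrable (fun ω => ‖e₂ ω‖ ^ 2) ℙ := by
    have h := cn_integrable_absSq hv₂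
    rw [← he₂law] at h
    exact (integrable_map_measure habsmeas.aestronglyMeasurable hmeas₂).mp h
  -- transferred integral values
  have int₁re : ∫ ω, (e₁ ω).re ∂ℙ = 0 := by
    have h := integral_map hmeas₁ (Complex.measurable_re.aestronglyMeasurable
      (μ := Measure.map e₁ ℙ))
    rw [he₁law, cn_integral_re hv₁] at h
    exact h.symm
  have int₁im : ∫ ω, (e₁ ω).im ∂ℙ = 0 := by
    have h := integral_map hmeas₁ (Complex.measurable_im.aestronglyMeasurable
      (μ := Measure.map e₁ ℙ))
    rw [he₁law, cn_integral_im hv₁] at h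
    exact h.symm
  have int₁abs : ∫ ω, ‖e₁ ω‖ ^ 2 ∂ℙ = v₁ := by
    have h := integral_map hmeas₁ (habsmeas.aestronglyMeasurable (μ := Measure.map e₁ ℙ))
    rw [he₁law, cn_integral_absSq hv₁] at h
    exact h.symm
  have int₂abs : ∫ ω, ‖e₂ ω‖ ^ 2 ∂ℙ = v₂ := by
    have h := integral_map hmeas₂ (habsmeas.aestronglyMeasurable (μ := Measure.map e₂ ℙ))
    rw [he₂law, cn_integral_absSq hv₂] at h
    exact h.symm
  -- independence of the real and imaginary parts
  have hindre : IndepFun (fun ω => (e₁ ω).re) (fun ω => (e₂ ω).re) ℙ :=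
    hindep.comp Complex.measurable_re Complex.measurable_re
  have hindim : IndepFun (fun ω => (e₁ ω).im) (fun ω => (e₂ ω).im) ℙ :=
    hindep.comp Complex.measurable_im Complex.measurable_im
  have icross_re : Integrable (fun ω => (e₁ ω).re * (e₂ ω).re) ℙ :=
    hindre.integrable_mul i₁re i₂re
  have icross_im : Integrable (fun ω => (e₁ ω).im * (e₂ ω).im) ℙ :=
    hindim.integrable_mul i₁im i₂im
  have cross_re : ∫ ω, (e₁ ω).re * (e₂ ω).re ∂ℙ = 0 := by
    have h := hindre.integral_mul_eq_mul_integral i₁re.aestronglyMeasurable i₂re.aestronglyMeasurable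
    simp only [Pi.mul_apply] at h
    rw [h, int₁re, zero_mul]
  have cross_im : ∫ ω, (e₁ ω).im * (e₂ ω).im ∂ℙ = 0 := by
    have h := hindim.integral_mul_eq_mul_integral i₁im.aestronglyMeasurable i₂im.aestronglyMeasurable
    simp only [Pi.mul_apply] at h
    rw [h, int₁im, zero_mul]
  -- pointwise expansion of the squared error
  have hpt : ∀ ω, (‖gehat ω - ge ω‖) ^ 2
      = a ^ 2 * ‖e₁ ω‖ ^ 2 + ‖e₂ ω‖ ^ 2
        - 2 * a * ((e₁ ω).re * (e₂ ω).re) - 2 * a * ((e₁ ω).im * (e₂ ω).im) := by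
    intro ω
    have h : gehat ω - ge ω = ((a : ℝ) : ℂ) * e₁ ω - e₂ ω := by
      rw [hgehat, hge, he₁]
      ring
    rw [h]
    simp only [Complex.sq_norm, Complex.normSq_apply, Complex.sub_re, Complex.sub_im,
      Complex.mul_re, Complex.mul_im, Complex.ofReal_re, Complex.ofReal_im]
    ring
  have hptfun : (fun ω => (‖gehat ω - ge ω‖) ^ 2)
      = fun ω => a ^ 2 * ‖e₁ ω‖ ^ 2 + ‖e₂ ω‖ ^ 2
        - 2 * a * ((e₁ ω).re * (e₂ ω).re) - 2 * a * ((e₁ ω).im * (e₂ ω).im) :=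
    funext hpt
  rw [hptfun]
  have IA : Integrable (fun ω => a ^ 2 * ‖e₁ ω‖ ^ 2) ℙ := i₁abs.const_mul _
  have IC : Integrable (fun ω => 2 * a * ((e₁ ω).re * (e₂ ω).re)) ℙ := icross_re.const_mul _
  have ID : Integrable (fun ω => 2 * a * ((e₁ ω).im * (e₂ ω).im)) ℙ := icross_im.const_mul _
  have IAB : Integrable (fun ω => a ^ 2 * ‖e₁ ω‖ ^ 2
      + ‖e₂ ω‖ ^ 2) ℙ := IA.add i₂abs
  have IABC : Integrable (fun ω => a ^ 2 * ‖e₁ ω‖ ^ 2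
      + ‖e₂ ω‖ ^ 2 - 2 * a * ((e₁ ω).re * (e₂ ω).re)) ℙ := IAB.sub IC
  rw [integral_sub IABC ID, integral_sub IAB IC,
    integral_add IA i₂abs, integral_const_mul, integral_const_mul, integral_const_mul,
    int₁abs, int₂abs, cross_re, cross_im]
  ring
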